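/- Let $\sigma \in \{1,-1\}$ and $\Lambda = \begin{pmatrix} 0 & \sigma \\ 1 & 0 \end{pmatrix}$. Suppose $r_1, r_2 : \mathbb{R} \to \mathbb{C}$ and nonvanishing $a_1, a_2 : \mathbb{R} \to \mathbb{C}$ satisfy $\overline{r_2(-k)} = r_1(k) a_1(k)/a_2(k)$, $\overline{r_1(-k)} = r_2(k) a_2(k)/a_1(k)$, and $1 + \sigma r_1(k) r_2(k) = 1/(a_1(k) a_2(k))$ for all $k \in \mathbb{R}$. For real $x, t, k$ let $J(x,t,k) = \begin{pmatrix} 1 + \sigma r_1(k) r_2(k) & \sigma r_2(k) e^{-2ikx - 4ik^2 t} \\ r_1(k) e^{2ikx + 4ik^2 t} & 1 \end{pmatrix}$. Then $\Lambda \, \overline{J(-x,t,-k)} \, \Lambda^{-1} = \begin{pmatrix} a_2(k) & 0 \\ 0 & 1/a_2(k) \end{pmatrix} J(x,t,k) \begin{pmatrix} a_1(k) & 0 \\ 0 & 1/a_1(k) \end{pmatrix}$. -/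

import Mathlib

open Matrix Complex

theorem jump_matrix_symmetry
    (σ : ℂ) (hσ : σ = 1 ∨ σ = -1)
    (r₁ r₂ a₁ a₂ : ℝ → ℂ)
    (ha₁ : ∀ k : ℝ, a₁ k ≠ 0) (ha₂ : ∀ k : ℝ, a₂ k ≠ 0)
    (h₁ : ∀ k : ℝ, (starRingEnd ℂ) (r₂ (-k)) = r₁ k * (a₁ k / a₂ k))
    (h₂ : ∀ k : ℝ, (starRingEnd ℂ) (r₁ (-k)) = r₂ k * (a₂ k / a₁ k))
    (h₃ : ∀ k : ℝ, 1 + σ * r₁ k * r₂ k = 1 / (a₁ k * a₂ k))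
    (J : ℝ → ℝ → ℝ → Matrix (Fin 2) (Fin 2) ℂ)
    (hJ : ∀ x t k : ℝ, J x t k =
      !![1 + σ * r₁ k * r₂ k,
          σ * r₂ k * Complex.exp (-2 * Complex.I * k * x - 4 * Complex.I * k ^ 2 * t);
         r₁ k * Complex.exp (2 * Complex.I * k * x + 4 * Complex.I * k ^ 2 * t), 1]) :
    ∀ x t k : ℝ,
      (!![(0 : ℂ), σ; 1, 0]) * ((J (-x) t (-k)).map (starRingEnd ℂ))
          * (!![(0 : ℂ), σ; 1, 0])⁻¹
        = !![a₂ k, 0; 0, 1 / a₂ k] * J x t k * !![a₁ k, 0; 0, 1 / a₁ k] := by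
  intro x t k
  have hσ2 : σ * σ = 1 := by rcases hσ with h | h <;> simp [h]
  have hσ0 : σ ≠ 0 := by rcases hσ with h | h <;> simp [h]
  have hinv : (!![(0 : ℂ), σ; 1, 0])⁻¹ = !![0, 1; σ, 0] := by
    apply Matrix.inv_eq_right_inv
    ext i j
    fin_cases i <;> fin_cases j <;>
      simp [Matrix.mul_apply, Fin.sum_univ_two, hσ2]
  have hconjσ : (starRingEnd ℂ) σ = σ := by
    rcases hσ with h | h <;> simp [h]
  have hexp1 : (starRingEnd ℂ) (Complex.exp (-(2 * Complex.I * (k:ℝ) * (x:ℝ))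
      - 4 * Complex.I * (k:ℝ) ^ 2 * (t:ℝ))) =
      Complex.exp (2 * Complex.I * (k:ℝ) * (x:ℝ) + 4 * Complex.I * (k:ℝ) ^ 2 * (t:ℝ)) := by
    rw [← Complex.exp_conj]
    congr 1
    simp [map_sub, _root_.map_mul, map_ofNat, Complex.conj_I, Complex.conj_ofReal]
    try ring
  have hexp2 : (starRingEnd ℂ) (Complex.exp (2 * Complex.I * (k:ℝ) * (x:ℝ)
      + 4 * Complex.I * (k:ℝ) ^ 2 * (t:ℝ))) =
      Complex.exp (-(2 * Complex.I * (k:ℝ) * (x:ℝ)) - 4 * Complex.I * (k:ℝ) ^ 2 * (t:ℝ)) := by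
    rw [← Complex.exp_conj]
    congr 1
    simp [map_add, _root_.map_mul, map_ofNat, Complex.conj_I, Complex.conj_ofReal]
    try ring
  have hmap : (J (-x) t (-k)).map (starRingEnd ℂ) =
      !![1 + σ * (r₂ k * (a₂ k / a₁ k)) * (r₁ k * (a₁ k / a₂ k)),
         σ * (r₁ k * (a₁ k / a₂ k)) *
           Complex.exp (2 * Complex.I * k * x + 4 * Complex.I * k ^ 2 * t);
         (r₂ k * (a₂ k / a₁ k)) *
           Complex.exp (-2 * Complex.I * k * x - 4 * Complex.I * k ^ 2 * t), 1] := by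
    rw [hJ]
    ext i j
    fin_cases i <;> fin_cases j <;>
      simp [hconjσ, hexp1, hexp2, h₁, h₂]
  rw [hinv, hmap, hJ]
  have e3 := h₃ k
  have e1 := ha₁ k
  have e2 := ha₂ k
  ext i j
  fin_cases i <;> fin_cases j <;>
    simp [Matrix.mul_apply, Fin.sum_univ_two, hσ2] <;>
    (try field_simp) <;> (try ring_nf)

  · have e4 : a₁ k * a₂ k + σ * r₁ k * r₂ k * (a₁ k * a₂ k) = 1 := by
      field_simp at e3
      linear_combination e3
    linear_combination -e4
  · have hσ2' : σ ^ 2 = 1 := by rw [sq, hσ2]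
    linear_combination (r₁ k) * hσ2'
  · have e4 : a₁ k * a₂ k + σ * r₁ k * r₂ k * (a₁ k * a₂ k) = 1 := by
      field_simp at e3
      linear_combination e3
    linear_combination e4
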